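/- For a canonical Blaschke product B of degree 2 with zeros 0 and a_1 ≠ 0: if z_1 ≠ z_2 lie on the unit circle, B(z_1) = B(z_2), and z is the intersection of the tangent lines to the unit circle at z_1 and z_2, then conj(a_1) z + a_1 conj(z) = 2. -/

import Mathlib

open Complex

theorem exterior_line_deg2 (a₁ : ℂ) (ha₁ : 0 < ‖a₁‖)
    (ha₁' : ‖a₁‖ < 1)
    (B : ℂ → ℂ)
    (hB : ∀ z, B z = z * (z - a₁) / (1 - (starRingEnd ℂ) a₁ * z))
    (z₁ z₂ z : ℂ) (hz₁ : ‖z₁‖ = 1) (hz₂ : ‖z₂‖ = 1)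
    (hne : z₁ ≠ z₂) (heq : B z₁ = B z₂)
    (ht₁ : (starRingEnd ℂ) z₁ * z + z₁ * (starRingEnd ℂ) z = 2)
    (ht₂ : (starRingEnd ℂ) z₂ * z + z₂ * (starRingEnd ℂ) z = 2) :
    (starRingEnd ℂ) a₁ * z + a₁ * (starRingEnd ℂ) z = 2 := by
  set c := (starRingEnd ℂ) a₁ with hc
  set u := (starRingEnd ℂ) z with huu
  have hw₁ : z₁ * (starRingEnd ℂ) z₁ = 1 := by
    rw [Complex.mul_conj, Complex.normSq_eq_norm_sq, hz₁]; norm_num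
  have hw₂ : z₂ * (starRingEnd ℂ) z₂ = 1 := by
    rw [Complex.mul_conj, Complex.normSq_eq_norm_sq, hz₂]; norm_num
  have hne' : z₁ - z₂ ≠ 0 := sub_ne_zero.mpr hne
  have hd₁ : 1 - c * z₁ ≠ 0 := by
    intro h
    have h1 : (1 : ℂ) = c * z₁ := by linear_combination h
    have h2 : ‖c * z₁‖ = 1 := by rw [← h1]; simp
    rw [norm_mul, hz₁, hc, Complex.norm_conj] at h2
    simp at h2
    linarith
  have hd₂ : 1 - c * z₂ ≠ 0 := by
    intro h
    have h1 : (1 : ℂ) = c * z₂ := by linear_combination h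
    have h2 : ‖c * z₂‖ = 1 := by rw [← h1]; simp
    rw [norm_mul, hz₂, hc, Complex.norm_conj] at h2
    simp at h2
    linarith
  rw [hB z₁, hB z₂, div_eq_div_iff hd₁ hd₂] at heq
  have key : z₁ + z₂ = a₁ + c * z₁ * z₂ :=
    mul_left_cancel₀ hne' (by linear_combination heq)
  have hu : (z₁ + z₂) * u = 2 :=
    mul_left_cancel₀ hne' (by linear_combination z₁ * ht₁ - z₂ * ht₂ - z * hw₁ + z * hw₂)
  have hs : z₁ + z₂ ≠ 0 := by
    intro h
    rw [h, zero_mul] at hu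
    exact two_ne_zero hu.symm
  have hz : (z₁ + z₂) * z = 2 * z₁ * z₂ := by
    linear_combination (z₁ + z₂) * z₁ * ht₁ - (z₁ + z₂) * z * hw₁ - z₁ ^ 2 * hu
  exact mul_left_cancel₀ hs (by linear_combination c * hz + a₁ * hu - 2 * key)
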